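/- Let H be a real Hilbert space and C a nonempty closed convex subset of H. Let T_1,…,T_N : C → C be closed relatively nonexpansive mappings with F = ⋂_{i=1}^N F(T_i) ≠ ∅. Let {α_n} ⊂ [0,1] with α_n → 0. Let {x_n} be generated by: x_0 ∈ C, C_0 = C; y_n^i = α_n x_n + (1 − α_n) T_i x_n for i = 1,…,N; choose i_n ∈ {1,…,N} with ‖y_n^{i_n} − x_n‖ = max_{1≤i≤N} ‖y_n^i − x_n‖ and set ȳ_n = y_n^{i_n}; C_{n+1} = {v ∈ C_n : ‖v − ȳ_n‖ ≤ ‖v − x_n‖}; and x_{n+1} is the metric projection of x_0 onto C_{n+1}. Then {x_n} converges strongly to the metric projection of x_0 onto F. -/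

import Mathlib

open Filter Topology

private lemma proj_sq_ineq {H : Type*} [NormedAddCommGroup H] [InnerProductSpace ℝ H]
    {K : Set H} (hK : Convex ℝ K) {z x0 v : H} (hz : z ∈ K)
    (hmin : ∀ w ∈ K, ‖z - x0‖ ≤ ‖w - x0‖) (hv : v ∈ K) :
    ‖v - z‖ ^ 2 + ‖z - x0‖ ^ 2 ≤ ‖v - x0‖ ^ 2 := by
  have hne : Nonempty K := ⟨⟨z, hz⟩⟩
  have hinf : ‖x0 - z‖ = ⨅ w : K, ‖x0 - (w : H)‖ := by
    refine le_antisymm (le_ciInf fun w => ?_) (ciInf_le ⟨0, fun r hr => ?_⟩ (⟨z, hz⟩ : K))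
    · rw [norm_sub_rev, norm_sub_rev x0]; exact hmin w w.2
    · obtain ⟨w, rfl⟩ := hr; exact norm_nonneg _
  have h1 := (norm_eq_iInf_iff_real_inner_le_zero hK hz).mp hinf v hv
  have h2 : ‖(v - z) + (z - x0)‖ ^ 2
      = ‖v - z‖ ^ 2 + 2 * inner ℝ (v - z) (z - x0) + ‖z - x0‖ ^ 2 := norm_add_sq_real _ _
  have h3 : (v - z) + (z - x0) = v - x0 := by abel
  have h4 : (inner ℝ (v - z) (z - x0) : ℝ) = - inner ℝ (x0 - z) (v - z) := by
    rw [real_inner_comm, show z - x0 = -(x0 - z) by abel, inner_neg_left]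
  rw [h3] at h2
  linarith

private lemma halfspace_convex {H : Type*} [NormedAddCommGroup H] [InnerProductSpace ℝ H]
    (a b : H) : Convex ℝ {v : H | ‖v - a‖ ≤ ‖v - b‖} := by
  have hset : {v : H | ‖v - a‖ ≤ ‖v - b‖}
      = {v : H | 2 * (inner ℝ v (b - a) : ℝ) ≤ ‖b‖ ^ 2 - ‖a‖ ^ 2} := by
    ext v
    simp only [Set.mem_setOf_eq]
    have ea : ‖v - a‖ ^ 2 = ‖v‖ ^ 2 - 2 * inner ℝ v a + ‖a‖ ^ 2 := norm_sub_sq_real v a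
    have eb : ‖v - b‖ ^ 2 = ‖v‖ ^ 2 - 2 * inner ℝ v b + ‖b‖ ^ 2 := norm_sub_sq_real v b
    have eab : (inner ℝ v (b - a) : ℝ) = inner ℝ v b - inner ℝ v a := inner_sub_right v b a
    constructor
    · intro h
      have := pow_le_pow_left₀ (norm_nonneg _) h 2
      nlinarith
    · intro h
      have h2 : ‖v - a‖ ^ 2 ≤ ‖v - b‖ ^ 2 := by nlinarith
      nlinarith [norm_nonneg (v - a), norm_nonneg (v - b)]
  rw [hset]
  exact convex_halfSpace_le ⟨fun u w => by simp [inner_add_left, mul_add],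
    fun c u => by simp [real_inner_smul_left]; ring⟩ _

/-- Parallel hybrid method for a finite family of closed relatively nonexpansive
mappings in a real Hilbert space (Corollary 3.9, Hilbert-space form).
Relative nonexpansiveness requires that the fixed point set coincides with the set
of asymptotic fixed points (weak limits `p` of sequences `u` in `C` with
`‖u n - T (u n)‖ → 0`); weak convergence is expressed via inner products. -/
theorem stmt_5
    {H : Type*} [NormedAddCommGroup H] [InnerProductSpace ℝ H] [CompleteSpace H]
    (C : Set H) (hCne : C.Nonempty) (hCcl : IsClosed C) (hCcv : Convex ℝ C)
    (N : ℕ) (hN : 0 < N) (T : Fin N → H → H) (hTmaps : ∀ i, Set.MapsTo (T i) C C)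
    (hQN : ∀ i, ∀ p ∈ C, T i p = p → ∀ x ∈ C, ‖p - T i x‖ ≤ ‖p - x‖)
    (hAFP : ∀ i, {p ∈ C | T i p = p} =
      {p ∈ C | ∃ u : ℕ → H, (∀ n, u n ∈ C) ∧
        (∀ w : H, Tendsto (fun n => (inner ℝ (u n) w : ℝ)) atTop (𝓝 (inner ℝ p w))) ∧
        Tendsto (fun n => ‖u n - T i (u n)‖) atTop (𝓝 0)})
    (hTclosed : ∀ i, ∀ (u : ℕ → H) (p q : H), (∀ n, u n ∈ C) → p ∈ C →
      Tendsto u atTop (𝓝 p) → Tendsto (fun n => T i (u n)) atTop (𝓝 q) → T i p = q)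
    (F : Set H) (hF : F = ⋂ i, {x ∈ C | T i x = x}) (hFne : F.Nonempty)
    (α : ℕ → ℝ) (hα : ∀ n, α n ∈ Set.Icc (0 : ℝ) 1) (hαlim : Tendsto α atTop (𝓝 0))
    (x : ℕ → H) (y : ℕ → Fin N → H) (i_ : ℕ → Fin N) (CS : ℕ → Set H)
    (hx0 : x 0 ∈ C) (hCS0 : CS 0 = C)
    (hy : ∀ n i, y n i = α n • x n + (1 - α n) • T i (x n))
    (hmax : ∀ n i, ‖y n i - x n‖ ≤ ‖y n (i_ n) - x n‖)
    (hCS : ∀ n, CS (n + 1) = {v ∈ CS n | ‖v - y n (i_ n)‖ ≤ ‖v - x n‖})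
    (hproj : ∀ n, x (n + 1) ∈ CS (n + 1) ∧
      ∀ v ∈ CS (n + 1), ‖x (n + 1) - x 0‖ ≤ ‖v - x 0‖) :
    ∃ z ∈ F, (∀ v ∈ F, ‖z - x 0‖ ≤ ‖v - x 0‖) ∧ Tendsto x atTop (𝓝 z) := by
  -- closedness of halfspaces
  have hhalfcl : ∀ a b : H, IsClosed {v : H | ‖v - a‖ ≤ ‖v - b‖} := fun a b =>
    isClosed_le (continuous_id.sub continuous_const).norm
      (continuous_id.sub continuous_const).norm
  -- F ⊆ C and fixed-point facts
  have hFfix : ∀ p ∈ F, ∀ i, p ∈ C ∧ T i p = p := by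
    intro p hp i
    rw [hF] at hp
    exact Set.mem_iInter.mp hp i
  have hFC : F ⊆ C := fun p hp => (hFfix p hp ⟨0, hN⟩).1
  -- x n ∈ CS n
  have hxmem : ∀ n, x n ∈ CS n := by
    intro n
    cases n with
    | zero => rw [hCS0]; exact hx0
    | succ n => exact (hproj n).1
  -- structure of CS n
  have hbase : ∀ n, CS n ⊆ C ∧ Convex ℝ (CS n) ∧ IsClosed (CS n) ∧ F ⊆ CS n := by
    intro n
    induction n with
    | zero => rw [hCS0]; exact ⟨subset_rfl, hCcv, hCcl, hFC⟩
    | succ n ih =>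
      obtain ⟨hsub, hconv, hcl, hFsub⟩ := ih
      have hEq : CS (n + 1) = CS n ∩ {v : H | ‖v - y n (i_ n)‖ ≤ ‖v - x n‖} := by
        rw [hCS n]; rfl
      refine ⟨?_, ?_, ?_, ?_⟩
      · rw [hEq]; exact (Set.inter_subset_left).trans hsub
      · rw [hEq]; exact hconv.inter (halfspace_convex _ _)
      · rw [hEq]; exact hcl.inter (hhalfcl _ _)
      · intro p hp
        rw [hEq]
        refine ⟨hFsub hp, ?_⟩
        obtain ⟨hpC, hpfix⟩ := hFfix p hp (i_ n)
        have hxC : x n ∈ C := hsub (hxmem n)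
        have hTle : ‖p - T (i_ n) (x n)‖ ≤ ‖p - x n‖ := hQN (i_ n) p hpC hpfix (x n) hxC
        obtain ⟨hα0, hα1⟩ := hα n
        have hdec : p - y n (i_ n)
            = α n • (p - x n) + (1 - α n) • (p - T (i_ n) (x n)) := by
          rw [hy]; module
        calc ‖p - y n (i_ n)‖
            ≤ ‖α n • (p - x n)‖ + ‖(1 - α n) • (p - T (i_ n) (x n))‖ := by
              rw [hdec]; exact norm_add_le _ _
          _ = α n * ‖p - x n‖ + (1 - α n) * ‖p - T (i_ n) (x n)‖ := by
              rw [norm_smul, norm_smul, Real.norm_eq_abs, Real.norm_eq_abs,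
                abs_of_nonneg hα0, abs_of_nonneg (by linarith)]
          _ ≤ α n * ‖p - x n‖ + (1 - α n) * ‖p - x n‖ := by nlinarith
          _ = ‖p - x n‖ := by ring
  -- minimality of x n over CS n
  have hmin : ∀ n, ∀ v ∈ CS n, ‖x n - x 0‖ ≤ ‖v - x 0‖ := by
    intro n
    cases n with
    | zero => intro v hv; simp
    | succ n => exact (hproj n).2
  -- CS is antitone
  have hCSsucc : ∀ n, CS (n + 1) ⊆ CS n := by
    intro n; rw [hCS n]; exact Set.sep_subset _ _
  have hCSanti : ∀ m n, m ≤ n → CS n ⊆ CS m := by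
    intro m n hmn
    induction n with
    | zero => rw [Nat.le_zero.mp hmn]
    | succ n ih =>
      rcases Nat.lt_or_ge m (n + 1) with h | h
      · exact (hCSsucc n).trans (ih (Nat.lt_succ_iff.mp h))
      · rw [le_antisymm hmn h]
  -- b n = ‖x n - x 0‖ ^ 2 is monotone and bounded
  set b : ℕ → ℝ := fun n => ‖x n - x 0‖ ^ 2 with hb
  have hbmono : Monotone b := by
    apply monotone_nat_of_le_succ
    intro n
    have h1 : ‖x n - x 0‖ ≤ ‖x (n + 1) - x 0‖ :=
      hmin n _ (hCSsucc n (hxmem (n + 1)))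
    exact pow_le_pow_left₀ (norm_nonneg _) h1 2
  obtain ⟨p, hp⟩ := hFne
  have hbbd : ∀ n, b n ≤ ‖p - x 0‖ ^ 2 := by
    intro n
    exact pow_le_pow_left₀ (norm_nonneg _) (hmin n p ((hbase n).2.2.2 hp)) 2
  -- b converges, hence Cauchy
  obtain ⟨L, hL⟩ : ∃ L, Tendsto b atTop (𝓝 L) :=
    ⟨_, tendsto_atTop_ciSup hbmono ⟨‖p - x 0‖ ^ 2, fun r ⟨n, hn⟩ => hn ▸ hbbd n⟩⟩
  have hbcauchy : CauchySeq b := hL.cauchySeq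
  -- key inequality
  have hkey : ∀ m n, m ≤ n → ‖x n - x m‖ ^ 2 ≤ b n - b m := by
    intro m n hmn
    have h := proj_sq_ineq (hbase m).2.1 (hxmem m) (hmin m)
      (hCSanti m n hmn (hxmem n))
    simp only [hb]
    linarith
  -- x is Cauchy
  have hxcauchy : CauchySeq x := by
    rw [Metric.cauchySeq_iff]
    intro ε hε
    obtain ⟨n0, hn0⟩ := Metric.cauchySeq_iff.mp hbcauchy (ε ^ 2) (by positivity)
    refine ⟨n0, fun m hm n hn => ?_⟩
    have key : ∀ k l, n0 ≤ k → n0 ≤ l → k ≤ l → dist (x l) (x k) < ε := by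
      intro k l hk hl hkl
      have h1 := hkey k l hkl
      have h2 := hn0 l hl k hk
      rw [Real.dist_eq] at h2
      have h3 : ‖x l - x k‖ ^ 2 < ε ^ 2 := by
        have := abs_lt.mp h2
        linarith [this.2]
      rw [dist_eq_norm]
      nlinarith [norm_nonneg (x l - x k)]
    rcases le_total m n with h | h
    · rw [dist_comm]; exact key m n hm hn h
    · exact key n m hn hm h
  obtain ⟨z, hz⟩ := cauchySeq_tendsto_of_complete hxcauchy
  have hxC : ∀ n, x n ∈ C := fun n => (hbase n).1 (hxmem n)
  have hzC : z ∈ C := hCcl.mem_of_tendsto hz (Filter.Eventually.of_forall hxC)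
  -- consecutive differences tend to 0
  have hdiff : Tendsto (fun n => ‖x (n + 1) - x n‖) atTop (𝓝 0) := by
    have h1 : Tendsto (fun n => x (n + 1)) atTop (𝓝 z) :=
      hz.comp (tendsto_add_atTop_nat 1)
    have h2 : Tendsto (fun n => x (n + 1) - x n) atTop (𝓝 (z - z)) := h1.sub hz
    rw [sub_self] at h2
    exact (tendsto_zero_iff_norm_tendsto_zero.mp h2)
  -- ‖ȳ_n - x_n‖ → 0
  have hybar : Tendsto (fun n => ‖y n (i_ n) - x n‖) atTop (𝓝 0) := by
    have hle : ∀ n, ‖y n (i_ n) - x n‖ ≤ 2 * ‖x (n + 1) - x n‖ := by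
      intro n
      have hmem := hxmem (n + 1)
      rw [hCS n] at hmem
      have h1 : ‖x (n + 1) - y n (i_ n)‖ ≤ ‖x (n + 1) - x n‖ := hmem.2
      calc ‖y n (i_ n) - x n‖
          ≤ ‖y n (i_ n) - x (n + 1)‖ + ‖x (n + 1) - x n‖ := norm_sub_le_norm_sub_add_norm_sub _ _ _
        _ ≤ 2 * ‖x (n + 1) - x n‖ := by rw [norm_sub_rev]; linarith
    have h2 : Tendsto (fun n => 2 * ‖x (n + 1) - x n‖) atTop (𝓝 0) := by
      have := hdiff.const_mul 2
      simpa using this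
    exact squeeze_zero (fun n => norm_nonneg _) hle h2
  -- ‖T i (x n) - x n‖ → 0 for each i
  have hTi : ∀ i, Tendsto (fun n => ‖T i (x n) - x n‖) atTop (𝓝 0) := by
    intro i
    have heq : ∀ n, ‖y n i - x n‖ = (1 - α n) * ‖T i (x n) - x n‖ := by
      intro n
      have : y n i - x n = (1 - α n) • (T i (x n) - x n) := by rw [hy]; module
      rw [this, norm_smul, Real.norm_eq_abs, abs_of_nonneg (by linarith [(hα n).2])]
    have hprod : Tendsto (fun n => (1 - α n) * ‖T i (x n) - x n‖) atTop (𝓝 0) := by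
      apply squeeze_zero (fun n => mul_nonneg (by linarith [(hα n).2]) (norm_nonneg _)) (fun n => ?_) hybar
      rw [← heq]; exact hmax n i
    have hinv : Tendsto (fun n => (1 - α n)⁻¹) atTop (𝓝 1) := by
      have h1 : Tendsto (fun n => 1 - α n) atTop (𝓝 1) := by
        have := tendsto_const_nhds.sub hαlim (α := ℕ) (f := fun _ => (1:ℝ))
        simpa using this
      have := h1.inv₀ one_ne_zero
      simpa using this
    have hmul := hinv.mul hprod
    rw [mul_zero] at hmul
    apply hmul.congr'
    filter_upwards [hαlim.eventually_lt_const (by norm_num : (0:ℝ) < 1/2)] with n hn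
    have h1 : (1 - α n) ≠ 0 := by linarith
    field_simp
  -- T i z = z for each i
  have hfix : ∀ i, T i z = z := by
    intro i
    have h1 : Tendsto (fun n => T i (x n) - x n) atTop (𝓝 0) :=
      tendsto_zero_iff_norm_tendsto_zero.mpr (hTi i)
    have h2 : Tendsto (fun n => T i (x n)) atTop (𝓝 z) := by
      have := h1.add hz
      simpa using this
    exact hTclosed i x z z hxC hzC hz h2
  have hzF : z ∈ F := by
    rw [hF]
    exact Set.mem_iInter.mpr fun i => ⟨hzC, hfix i⟩
  refine ⟨z, hzF, fun v hv => ?_, hz⟩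
  have hnorm : Tendsto (fun n => ‖x n - x 0‖) atTop (𝓝 ‖z - x 0‖) :=
    (hz.sub tendsto_const_nhds).norm
  exact le_of_tendsto hnorm (Filter.Eventually.of_forall fun n =>
    hmin n v ((hbase n).2.2.2 hv))
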